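/- Let w ∈ S_n with w ≠ w₀ and let (i,j) be an addable cell of the dominant part of the Rothe diagram of w with j = α(w) (the leftmost column containing such an addable cell (i,j) with i + j ≤ n). Then w < w s_i, i.e., w(i) < w(i+1). -/

import Mathlib

/-- Coxeter length of a permutation of `Fin n`: number of inversions. -/
def len {n : ℕ} (w : Equiv.Perm (Fin n)) : ℕ :=
  (Finset.univ.filter (fun p : Fin n × Fin n => p.1 < p.2 ∧ w p.2 < w p.1)).card

/-- The longest permutation `w₀` of `S_n` (reversal). -/
def longest (n : ℕ) : Equiv.Perm (Fin n) := Fin.revPerm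

/-- The simple transposition `s_i` (1-based index `i ∈ [n-1]`), exchanging
positions `i` and `i+1` of the one-line notation. -/
def simpleRefl (n i : ℕ) : Equiv.Perm (Fin n) :=
  if h : 1 ≤ i ∧ i < n then Equiv.swap ⟨i - 1, by omega⟩ ⟨i, by omega⟩ else 1

/-- The Hecke (Demazure) up-operator: `w * τ_i = w` if `ℓ(w s_i) < ℓ(w)`, else `w s_i`. -/
def heckeStar {n : ℕ} (w : Equiv.Perm (Fin n)) (i : ℕ) : Equiv.Perm (Fin n) :=
  if len (w * simpleRefl n i) < len w then w else w * simpleRefl n i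

/-- The down-operator: `w □ τ_i = w` if `ℓ(w s_i) > ℓ(w)`, else `w s_i`. -/
def heckeSq {n : ℕ} (w : Equiv.Perm (Fin n)) (i : ℕ) : Equiv.Perm (Fin n) :=
  if len w < len (w * simpleRefl n i) then w else w * simpleRefl n i

/-- The value `w(i)` in 1-based one-line notation, for the permutation of
`{1, …, n}` determined by `w : Equiv.Perm (Fin n)` (extended by the identity
outside `[1,n]`, matching the embedding `S_n ↪ S_+`). -/
def act {n : ℕ} (w : Equiv.Perm (Fin n)) (i : ℕ) : ℕ :=
  if h : 1 ≤ i ∧ i ≤ n then ((w ⟨i - 1, by omega⟩ : Fin n) : ℕ) + 1 else i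

/-- The Rothe diagram `D(w) = {(i,j) : w(i) > j and w⁻¹(j) > i}`, 1-based. -/
def rd {n : ℕ} (w : Equiv.Perm (Fin n)) : Set (ℕ × ℕ) :=
  {p | 1 ≤ p.1 ∧ 1 ≤ p.2 ∧ p.2 < act w p.1 ∧ p.1 < act w⁻¹ p.2}

/-- The dominant part `dom(w)` of the Rothe diagram: the largest Young-diagram
shaped subset, i.e. cells whose whole upper-left rectangle lies in `D(w)`. -/
def domP {n : ℕ} (w : Equiv.Perm (Fin n)) : Set (ℕ × ℕ) :=
  {p | 1 ≤ p.1 ∧ 1 ≤ p.2 ∧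
    ∀ q : ℕ × ℕ, 1 ≤ q.1 → 1 ≤ q.2 → q.1 ≤ p.1 → q.2 ≤ p.2 → q ∈ rd w}

/-- `(i,j)` is an addable cell of `dom(w)`. -/
def addableP {n : ℕ} (w : Equiv.Perm (Fin n)) (i j : ℕ) : Prop :=
  1 ≤ i ∧ 1 ≤ j ∧ (i, j) ∉ domP w ∧
    (1 < i → (i - 1, j) ∈ domP w) ∧ (1 < j → (i, j - 1) ∈ domP w)

/-- `(i,j)` is an addable cell of `dom(w)` with `j = α(w)`, i.e. `i + j ≤ n` and
`j` is the leftmost column containing an addable cell `(i',j')` with `i'+j' ≤ n`. -/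
def alphaCell {n : ℕ} (w : Equiv.Perm (Fin n)) (i j : ℕ) : Prop :=
  addableP w i j ∧ i + j ≤ n ∧
    ∀ i' j', addableP w i' j' → i' + j' ≤ n → j ≤ j'

/-- `(a, w(a))` is a neighbor of `(i, w(i))` in the graph of `w` (1-based):
`i ≤ a`, `w(i) ≤ w(a)`, `(a, w(a)) ≠ (i, w(i))`, and no other point of the
graph of `w` lies in the rectangle `[i,a] × [w(i), w(a)]`. -/
def isNbrP {n : ℕ} (w : Equiv.Perm (Fin n)) (i a : ℕ) : Prop :=
  i ≤ a ∧ act w i ≤ act w a ∧ (a, act w a) ≠ (i, act w i) ∧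
    ∀ a', i ≤ a' → a' ≤ a → act w i ≤ act w a' → act w a' ≤ act w a →
      a' = i ∨ a' = a

lemma act_eq {n : ℕ} (w : Equiv.Perm (Fin n)) {i : ℕ} (h1 : 1 ≤ i) (h2 : i ≤ n) :
    act w i = (w ⟨i - 1, by omega⟩ : ℕ) + 1 := by
  simp [act, h1, h2]

lemma act_apply {n : ℕ} (w : Equiv.Perm (Fin n)) (k : Fin n) :
    act w ((k : ℕ) + 1) = (w k : ℕ) + 1 := by
  have hk := k.isLt
  rw [act_eq w (by omega) (by omega)]
  have e : (⟨(k:ℕ) + 1 - 1, by omega⟩ : Fin n) = k := Fin.ext (by simp)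
  rw [e]

lemma act_bounds {n : ℕ} (w : Equiv.Perm (Fin n)) {i : ℕ} (h1 : 1 ≤ i) (h2 : i ≤ n) :
    1 ≤ act w i ∧ act w i ≤ n := by
  rw [act_eq w h1 h2]
  have := (w ⟨i - 1, by omega⟩).isLt
  omega

lemma act_act_inv {n : ℕ} (w : Equiv.Perm (Fin n)) {m : ℕ} (h1 : 1 ≤ m) (h2 : m ≤ n) :
    act w (act w⁻¹ m) = m := by
  have e0 : m = ((⟨m - 1, by omega⟩ : Fin n) : ℕ) + 1 := by simp; omega
  rw [e0, act_apply w⁻¹, act_apply w, ← Equiv.Perm.mul_apply, mul_inv_cancel, Equiv.Perm.one_apply]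

lemma act_inj {n : ℕ} (w : Equiv.Perm (Fin n)) {i i' : ℕ} (h1 : 1 ≤ i) (h2 : i ≤ n)
    (h3 : 1 ≤ i') (h4 : i' ≤ n) (he : act w i = act w i') : i = i' := by
  rw [act_eq w h1 h2, act_eq w h3 h4] at he
  have e : w ⟨i - 1, by omega⟩ = w ⟨i' - 1, by omega⟩ := Fin.ext (by omega)
  have := w.injective e
  have h5 : i - 1 = i' - 1 := by simpa using this
  omega

lemma swap_succ_lt {n : ℕ} {a b p q : Fin n} (hab : (a:ℕ) + 1 = b) (hpq : p < q)
    (hne : ¬(p = a ∧ q = b)) : Equiv.swap a b p < Equiv.swap a b q := by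
  simp only [Equiv.swap_apply_def]
  simp only [Fin.lt_def, Fin.ext_iff] at *
  split_ifs <;> omega

lemma len_mul_swap {n : ℕ} (w : Equiv.Perm (Fin n)) (a b : Fin n)
    (hab : (a:ℕ) + 1 = b) (hvw : w a < w b) :
    len w < len (w * Equiv.swap a b) := by
  classical
  set s := Equiv.swap a b with hs
  have hslt : a < b := Fin.lt_def.mpr (by omega)
  set T : Finset (Fin n × Fin n) :=
    Finset.univ.filter (fun p : Fin n × Fin n => p.1 < p.2 ∧ (w * s) p.2 < (w * s) p.1) with hT
  have hmem : ((a, b) : Fin n × Fin n) ∈ T := by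
    simp only [hT, Finset.mem_filter, Finset.mem_univ, true_and]
    refine ⟨hslt, ?_⟩
    simp only [Equiv.Perm.mul_apply, hs, Equiv.swap_apply_left, Equiv.swap_apply_right]
    exact hvw
  have hcard : len w = (T.erase (a, b)).card := by
    unfold len
    apply Finset.card_nbij' (fun p => (s p.1, s p.2)) (fun p => (s p.1, s p.2))
    · intro p hp
      simp only [Finset.mem_coe, Finset.mem_filter, Finset.mem_univ, true_and] at hp
      obtain ⟨hp1, hp2⟩ := hp
      have hne : ¬(p.1 = a ∧ p.2 = b) := by
        rintro ⟨u, v⟩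
        rw [u, v] at hp2
        exact absurd hvw (not_lt.mpr hp2.le)
      simp only [hT, Finset.mem_coe, Finset.mem_erase, Finset.mem_filter, Finset.mem_univ, true_and]
      refine ⟨?_, swap_succ_lt hab hp1 hne, ?_⟩
      · intro hc
        have h1 : s p.1 = a := congrArg Prod.fst hc
        have h2 : s p.2 = b := congrArg Prod.snd hc
        have : p.1 = s a := by rw [← h1, hs, Equiv.swap_apply_self]
        have hb' : p.2 = s b := by rw [← h2, hs, Equiv.swap_apply_self]
        rw [hs, Equiv.swap_apply_left] at this
        rw [hs, Equiv.swap_apply_right] at hb'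
        rw [this, hb'] at hp1
        exact absurd hslt (not_lt.mpr hp1.le)
      · simp only [Equiv.Perm.mul_apply, hs, Equiv.swap_apply_self]
        exact hp2
    · intro q hq
      simp only [hT, Finset.mem_coe, Finset.mem_erase, Finset.mem_filter, Finset.mem_univ, true_and] at hq
      obtain ⟨hqne, hq1, hq2⟩ := hq
      have hne : ¬(q.1 = a ∧ q.2 = b) := by
        rintro ⟨u, v⟩
        exact hqne (Prod.ext u v)
      simp only [Finset.mem_coe, Finset.mem_filter, Finset.mem_univ, true_and]
      refine ⟨swap_succ_lt hab hq1 hne, ?_⟩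
      simpa only [Equiv.Perm.mul_apply] using hq2
    · intro p _
      simp [hs, Equiv.swap_apply_self]
    · intro q _
      simp [hs, Equiv.swap_apply_self]
  have := Finset.card_erase_add_one hmem
  have hlen : len (w * s) = T.card := rfl
  omega


/-- Lemma 5.1(1): if `w ≠ w₀` and `(i,j)` is an addable cell of `dom(w)` with
`j = α(w)`, then `w < w s_i`, i.e., `w(i) < w(i+1)`. -/
theorem lt_mul_simpleRefl_of_alphaCell {n : ℕ} (w : Equiv.Perm (Fin n)) (i j : ℕ)
    (hw : w ≠ longest n) (h : alphaCell w i j) :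
    len w < len (w * simpleRefl n i) ∧ act w i < act w (i + 1) := by
  obtain ⟨⟨hi1, hj1, hnd, hup, hleft⟩, hijn, hmin⟩ := h
  have hi_lt : i < n := by omega
  have hbi := act_bounds w hi1 hi_lt.le
  have hbi1 := act_bounds w (i := i + 1) (by omega) (by omega)
  -- Step A : j ≤ act w i
  have hA : j ≤ act w i := by
    rcases eq_or_lt_of_le hj1 with h1 | h1
    · omega
    · have hr : ((i, j - 1) : ℕ × ℕ) ∈ rd w :=
        (hleft h1).2.2 (i, j - 1) hi1 (by omega) le_rfl le_rfl
      have hx : j - 1 < act w i := hr.2.2.1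
      omega
  -- Step B : i ≤ act w⁻¹ j
  have hbj := act_bounds w⁻¹ hj1 (by omega : j ≤ n)
  have hB : i ≤ act w⁻¹ j := by
    rcases eq_or_lt_of_le hi1 with h1 | h1
    · omega
    · have hr : ((i - 1, j) : ℕ × ℕ) ∈ rd w :=
        (hup h1).2.2 (i - 1, j) (by omega) hj1 le_rfl le_rfl
      have hx : i - 1 < act w⁻¹ j := hr.2.2.2
      omega
  -- Step C : (i,j) ∉ rd w
  have hC : ((i, j) : ℕ × ℕ) ∉ rd w := by
    intro hrd
    apply hnd
    refine ⟨hi1, hj1, ?_⟩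
    intro q hq1 hq2 hqi hqj
    rcases lt_or_eq_of_le hqi with hlt | heq
    · exact (hup (by omega)).2.2 q hq1 hq2 (by omega) hqj
    · rcases lt_or_eq_of_le hqj with hlt2 | heq2
      · exact (hleft (by omega)).2.2 q hq1 hq2 (by omega) (by omega)
      · have hq : q = (i, j) := Prod.ext heq heq2
        rw [hq]; exact hrd
  have hwi : act w i = j := by
    by_cases hh : j < act w i
    · have h2 : ¬ i < act w⁻¹ j := fun hc => hC ⟨hi1, hj1, hh, hc⟩
      have h3 : act w⁻¹ j = i := by omega
      have h4 := act_act_inv w hj1 (by omega : j ≤ n)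
      rw [h3] at h4
      exact h4
    · omega
  -- act w i < act w (i+1)
  have hact : act w i < act w (i + 1) := by
    by_contra hcon
    push_neg at hcon
    have hne : act w (i + 1) ≠ act w i := fun he =>
      absurd (act_inj w (by omega) (by omega) hi1 hi_lt.le he) (by omega)
    have hj'lt : act w (i + 1) < j := by omega
    have hj2 : 1 < j := by omega
    have hdl : ((i, j - 1) : ℕ × ℕ) ∈ domP w := hleft hj2
    have hadd : addableP w (i + 1) (act w (i + 1)) := by
      refine ⟨by omega, by omega, ?_, ?_, ?_⟩
      · intro hd
        have hr := hd.2.2 (i + 1, act w (i + 1)) (by omega) (by omega) le_rfl le_rfl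
        have hx : act w (i + 1) < act w (i + 1) := hr.2.2.1
        omega
      · intro _
        have e : i + 1 - 1 = i := by omega
        rw [e]
        exact ⟨hi1, by omega, fun q hq1 hq2 hqi hqj => hdl.2.2 q hq1 hq2 hqi (by omega)⟩
      · intro hj'2
        refine ⟨by omega, by omega, ?_⟩
        intro q hq1 hq2 hqi hqj
        have hqi' : q.1 ≤ i + 1 := hqi
        have hqj' : q.2 ≤ act w (i + 1) - 1 := hqj
        rcases lt_or_eq_of_le hqi' with hlt | heq
        · exact hdl.2.2 q hq1 hq2 (by omega) (by omega)
        · have hrow : ((i, q.2) : ℕ × ℕ) ∈ rd w :=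
            hdl.2.2 (i, q.2) hi1 hq2 le_rfl (by omega)
          have hinv : i < act w⁻¹ q.2 := hrow.2.2.2
          have hq2n : q.2 ≤ n := by omega
          have hinvne : act w⁻¹ q.2 ≠ i + 1 := by
            intro heq2
            have h4 := act_act_inv w hq2 hq2n
            rw [heq2] at h4
            omega
          refine ⟨hq1, hq2, ?_, ?_⟩
          · show q.2 < act w q.1
            rw [heq]; omega
          · show q.1 < act w⁻¹ q.2
            omega
      done
    have := hmin (i + 1) (act w (i + 1)) hadd (by omega)
    omega
  refine ⟨?_, hact⟩
  have hsr : simpleRefl n i =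
      Equiv.swap (⟨i - 1, by omega⟩ : Fin n) (⟨i, by omega⟩ : Fin n) := by
    rw [simpleRefl, dif_pos (⟨hi1, hi_lt⟩ : 1 ≤ i ∧ i < n)]
  rw [hsr]
  apply len_mul_swap
  · show (i - 1) + 1 = i
    omega
  · have e1 : act w i = (w (⟨i - 1, by omega⟩ : Fin n) : ℕ) + 1 := act_eq w hi1 hi_lt.le
    have e2 : act w (i + 1) = (w (⟨i, by omega⟩ : Fin n) : ℕ) + 1 := act_eq w (by omega) (by omega)
    rw [Fin.lt_def]
    omega
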